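/- Let U ⊆ ℂ be open and X, Y complex Hilbert spaces. The set K := {σ ∈ Hol(U, Ses_b(X,Y)) : ‖σ(z)‖ ≤ 1 for all z ∈ U} is compact in the topology 𝒯_Λ̃. If both X and Y are separable, then (K, 𝒯_Λ̃) is metrisable. -/

import Mathlib

noncomputable section
open Filter Topology ContinuousLinearMap

namespace Paper

/-- Holomorphy of a function defined on (the subtype of) a set `U ⊆ ℂ`:
it extends to a function `ℂ → E` differentiable on `U`. -/
def HolFn (U : Set ℂ) {E : Type*} [NormedAddCommGroup E] [NormedSpace ℂ E]
    (f : ↥U → E) : Prop :=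
  ∃ g : ℂ → E, DifferentiableOn ℂ g U ∧ ∀ z : ↥U, f z = g (z : ℂ)

/-- The topology of locally uniform (compact) convergence on functions `↥U → E`. -/
def kc (U : Set ℂ) (E : Type*) [UniformSpace E] : TopologicalSpace (↥U → E) :=
  (UniformOnFun.uniformSpace ↥U E {K : Set ↥U | IsCompact K}).toTopologicalSpace

/-- Bounded sesquilinear forms on `X × Y` (linear in the first, conjugate-linear in the
second argument), realised as `X →L[ℂ] (Y →L⋆[ℂ] ℂ)`; the operator norm coincides with
the sesquilinear sup-norm. -/
abbrev Sesq (X Y : Type*) [NormedAddCommGroup X] [NormedSpace ℂ X]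
    [NormedAddCommGroup Y] [NormedSpace ℂ Y] := X →L[ℂ] (Y →L⋆[ℂ] ℂ)

/-- The topology `𝒯_Λ̃` on sesquilinear-form-valued functions on `U`: the initial topology
w.r.t. `σ ↦ (z ↦ σ(z)(φ,ψ)) ∈ Hol(U,ℂ)` (compact convergence). -/
def luses (U : Set ℂ) (X Y : Type*) [NormedAddCommGroup X] [NormedSpace ℂ X]
    [NormedAddCommGroup Y] [NormedSpace ℂ Y] :
    TopologicalSpace (↥U → Sesq X Y) :=
  ⨅ (p : X × Y),
    TopologicalSpace.induced (fun σ => fun z : ↥U => σ z p.1 p.2) (kc U ℂ)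

/-- The map sending an operator `T` to its associated sesquilinear form
`(φ, ψ) ↦ ⟨Tφ, ψ⟩_Y` (linear in `φ`, conjugate-linear in `ψ`). -/
def Gop {X Y : Type*} [NormedAddCommGroup X] [InnerProductSpace ℂ X]
    [NormedAddCommGroup Y] [InnerProductSpace ℂ Y] (T : X →L[ℂ] Y) : Sesq X Y :=
  (innerSL ℂ).flip ∘L T

/-- The closed unit ball of `Hol(U, Ses_b(X,Y))`. -/
def sesBall (U : Set ℂ) (X Y : Type*) [NormedAddCommGroup X] [NormedSpace ℂ X]
    [NormedAddCommGroup Y] [NormedSpace ℂ Y] : Set (↥U → Sesq X Y) :=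
  {σ | HolFn U σ ∧ ∀ z : ↥U, ‖σ z‖ ≤ 1}

section Lemmas
open Metric
lemma coeff_bound {f : ℂ → ℂ} {z₀ : ℂ} {r M : ℝ} (hr : 0 < r)
    (hd : DifferentiableOn ℂ f (closedBall z₀ r))
    (hM : ∀ z ∈ closedBall z₀ r, ‖f z‖ ≤ M) (n : ℕ) :
    ‖(cauchyPowerSeries f z₀ r).coeff n‖ ≤ M / r ^ n := by
  have hM0 : 0 ≤ M := le_trans (norm_nonneg _) (hM z₀ (mem_closedBall_self hr.le))
  have hcont : Continuous fun θ : ℝ => f (circleMap z₀ r θ) := by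
    refine (hd.continuousOn).comp_continuous (continuous_circleMap _ _) fun θ => ?_
    exact sphere_subset_closedBall (circleMap_mem_sphere z₀ hr.le θ)
  have hint : (∫ θ : ℝ in (0)..2 * Real.pi, ‖f (circleMap z₀ r θ)‖) ≤ 2 * Real.pi * M := by
    have := intervalIntegral.integral_mono_on (a := 0) (b := 2 * Real.pi)
      Real.two_pi_pos.le (hcont.norm.intervalIntegrable _ _)
      (intervalIntegrable_const (μ := MeasureTheory.volume) (c := M))
      (fun θ _ => hM _ (sphere_subset_closedBall (circleMap_mem_sphere z₀ hr.le θ)))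
    simpa [mul_comm] using this
  calc ‖(cauchyPowerSeries f z₀ r).coeff n‖
      = ‖cauchyPowerSeries f z₀ r n‖ :=
        by rw [FormalMultilinearSeries.norm_apply_eq_norm_coef]
    _ ≤ ((2 * Real.pi)⁻¹ * ∫ θ : ℝ in (0)..2 * Real.pi, ‖f (circleMap z₀ r θ)‖) * |r|⁻¹ ^ n :=
        norm_cauchyPowerSeries_le f z₀ r n
    _ ≤ ((2 * Real.pi)⁻¹ * (2 * Real.pi * M)) * |r|⁻¹ ^ n := by
        gcongr
    _ = M / r ^ n := by
        rw [abs_of_nonneg hr.le]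
        field_simp [Real.pi_ne_zero, pow_ne_zero, hr.ne']
        rw [div_pow, one_pow, mul_assoc, div_mul_cancel₀ _ (pow_ne_zero _ hr.ne'), mul_one]



lemma deriv_eq_coeff {f : ℂ → ℂ} {z₀ : ℂ} {R : NNReal} (hR : 0 < R)
    (hd : DifferentiableOn ℂ f (closedBall z₀ R)) :
    deriv f z₀ = (cauchyPowerSeries f z₀ R).coeff 1 := by
  have h := (hd.hasFPowerSeriesOnBall hR).hasFPowerSeriesAt.deriv
  simpa [FormalMultilinearSeries.apply_eq_pow_smul_coeff] using h

lemma norm_deriv_le {f : ℂ → ℂ} {z₀ : ℂ} {R : NNReal} {M : ℝ} (hR : 0 < R)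
    (hd : DifferentiableOn ℂ f (closedBall z₀ R))
    (hM : ∀ z ∈ closedBall z₀ (R : ℝ), ‖f z‖ ≤ M) :
    ‖deriv f z₀‖ ≤ M / R := by
  have hr : (0:ℝ) < R := hR
  have := coeff_bound hr hd hM 1
  rw [deriv_eq_coeff hR hd]
  simpa using this

lemma taylor_bound {f : ℂ → ℂ} {z₀ : ℂ} {R : NNReal} {M : ℝ} (hR : 0 < R)
    (hd : DifferentiableOn ℂ f (closedBall z₀ R))
    (hM : ∀ z ∈ closedBall z₀ (R : ℝ), ‖f z‖ ≤ M) {h : ℂ} (hh : ‖h‖ ≤ R / 2) :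
    ‖f (z₀ + h) - f z₀ - h * deriv f z₀‖ ≤ 2 * M / R ^ 2 * ‖h‖ ^ 2 := by
  have hr : (0:ℝ) < R := hR
  have hM0 : 0 ≤ M := le_trans (norm_nonneg _) (hM z₀ (mem_closedBall_self hr.le))
  set p := cauchyPowerSeries f z₀ (R : ℝ) with hp_def
  have hp := hd.hasFPowerSeriesOnBall hR
  have hmem : h ∈ Metric.eball (0:ℂ) R := by
    rw [Metric.mem_eball, edist_zero_right, enorm_eq_nnnorm, ENNReal.coe_lt_coe]
    · exact_mod_cast lt_of_le_of_lt hh (by simpa using half_lt_self hr)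
  have hsum : HasSum (fun n => h ^ n • p.coeff n) (f (z₀ + h)) := by
    have := hp.hasSum hmem
    simpa [FormalMultilinearSeries.apply_eq_pow_smul_coeff] using this
  have hsum2 : HasSum (fun n => h ^ (n + 2) • p.coeff (n + 2))
      (f (z₀ + h) - ∑ i ∈ Finset.range 2, h ^ i • p.coeff i) :=
    (hasSum_nat_add_iff' 2).mpr hsum
  have hc0 : p.coeff 0 = f z₀ := hp.coeff_zero _
  have hc1 : p.coeff 1 = deriv f z₀ := (deriv_eq_coeff hR hd).symm
  have hsumval : ∑ i ∈ Finset.range 2, h ^ i • p.coeff i = f z₀ + h * deriv f z₀ := by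
    simp [Finset.sum_range_succ, hc0, hc1, smul_eq_mul]
  rw [hsumval] at hsum2
  have hb : ∀ n, ‖h ^ (n + 2) • p.coeff (n + 2)‖ ≤ (M / R ^ 2 * ‖h‖ ^ 2) * (1 / 2) ^ n := by
    intro n
    rw [norm_smul, norm_pow]
    have h1 : ‖p.coeff (n + 2)‖ ≤ M / (R : ℝ) ^ (n + 2) := coeff_bound hr hd hM _
    have hhR : ‖h‖ / (R : ℝ) ≤ 1 / 2 := by
      rw [div_le_div_iff₀ hr two_pos] at *
      linarith
    calc ‖h‖ ^ (n + 2) * ‖p.coeff (n + 2)‖ ≤ ‖h‖ ^ (n + 2) * (M / (R : ℝ) ^ (n + 2)) := by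
          gcongr
      _ = (M / R ^ 2 * ‖h‖ ^ 2) * (‖h‖ / R) ^ n := by
          rw [div_pow, pow_add, pow_add]
          field_simp
      _ ≤ (M / R ^ 2 * ‖h‖ ^ 2) * (1 / 2) ^ n := by
          have := pow_le_pow_left₀ (by positivity) hhR n
          gcongr
  have hsummable : Summable fun n => ‖h ^ (n + 2) • p.coeff (n + 2)‖ := by
    refine Summable.of_nonneg_of_le (fun n => norm_nonneg _) hb ?_
    exact (summable_geometric_two).mul_left _
  have key : ‖f (z₀ + h) - (f z₀ + h * deriv f z₀)‖ ≤ (M / R ^ 2 * ‖h‖ ^ 2) * 2 := by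
    rw [← hsum2.tsum_eq]
    refine le_trans (norm_tsum_le_tsum_norm hsummable) ?_
    have := Summable.tsum_le_tsum hb hsummable ((summable_geometric_two).mul_left _)
    refine le_trans this ?_
    rw [tsum_mul_left, tsum_geometric_two]
  calc ‖f (z₀ + h) - f z₀ - h * deriv f z₀‖
      = ‖f (z₀ + h) - (f z₀ + h * deriv f z₀)‖ := by ring_nf
    _ ≤ (M / R ^ 2 * ‖h‖ ^ 2) * 2 := key
    _ = 2 * M / R ^ 2 * ‖h‖ ^ 2 := by ring



variable {U : Set ℂ}

open Classical in
def extU (U : Set ℂ) {E : Type*} [Zero E] (f : ↥U → E) : ℂ → E :=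
  fun z => if h : z ∈ U then f ⟨z, h⟩ else 0

lemma extU_coe {E : Type*} [Zero E] (f : ↥U → E) (z : ↥U) : extU U f z = f z := by
  simp only [extU]
  rw [dif_pos z.2]

lemma holFn_iff {E : Type*} [NormedAddCommGroup E] [NormedSpace ℂ E] (f : ↥U → E) :
    HolFn U f ↔ DifferentiableOn ℂ (extU U f) U := by
  constructor
  · rintro ⟨g, hg, he⟩
    refine hg.congr fun z hz => ?_
    simp only [extU]
    rw [dif_pos hz, he ⟨z, hz⟩]
  · intro h
    exact ⟨extU U f, h, fun z => (extU_coe f z).symm⟩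


lemma holFn_of_weak {X Y : Type*} [NormedAddCommGroup X] [NormedSpace ℂ X]
    [NormedAddCommGroup Y] [NormedSpace ℂ Y]
    (hU : IsOpen U) {σ : ↥U → Sesq X Y} (hb : ∀ z, ‖σ z‖ ≤ 1)
    (hw : ∀ (φ : X) (ψ : Y), HolFn U fun z => σ z φ ψ) : HolFn U σ := by
  rw [holFn_iff]
  intro z₀ hz₀
  obtain ⟨r, hr, hball⟩ : ∃ r > 0, closedBall z₀ r ⊆ U :=
    (Metric.nhds_basis_closedBall.mem_iff.mp (hU.mem_nhds hz₀))
  set R : NNReal := ⟨r, hr.le⟩ with hR_def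
  have hRpos : 0 < R := by exact_mod_cast hr
  set F : X → Y → ℂ → ℂ := fun φ ψ => extU U (fun z => σ z φ ψ) with hF_def
  have hFval : ∀ (φ ψ) (w : ℂ), F φ ψ w = (extU U σ w) φ ψ := by
    intro φ ψ w
    by_cases h : w ∈ U <;> simp [hF_def, extU, h]
  have hFdiff : ∀ φ ψ, DifferentiableOn ℂ (F φ ψ) (closedBall z₀ (R : ℝ)) := fun φ ψ =>
    ((holFn_iff _).mp (hw φ ψ)).mono hball
  have hFbound : ∀ φ ψ, ∀ w ∈ closedBall z₀ (R : ℝ), ‖F φ ψ w‖ ≤ ‖φ‖ * ‖ψ‖ := by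
    intro φ ψ w hw'
    have hwU : w ∈ U := hball hw'
    simp only [hF_def, extU]
    rw [dif_pos hwU]
    calc ‖σ ⟨w, hwU⟩ φ ψ‖ ≤ ‖σ ⟨w, hwU⟩ φ‖ * ‖ψ‖ := (σ ⟨w, hwU⟩ φ).le_opNorm ψ
      _ ≤ (‖σ ⟨w, hwU⟩‖ * ‖φ‖) * ‖ψ‖ := by gcongr; exact (σ ⟨w, hwU⟩).le_opNorm φ
      _ ≤ (1 * ‖φ‖) * ‖ψ‖ := by gcongr; exact hb _
      _ = ‖φ‖ * ‖ψ‖ := by ring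
  have hFdiffAt : ∀ φ ψ, DifferentiableAt ℂ (F φ ψ) z₀ := fun φ ψ =>
    (hFdiff φ ψ).differentiableAt (Metric.closedBall_mem_nhds z₀ hr)
  set d : X → Y → ℂ := fun φ ψ => deriv (F φ ψ) z₀ with hd_def
  have H1 : ∀ (φ₁ φ₂ : X) (ψ : Y), d (φ₁ + φ₂) ψ = d φ₁ ψ + d φ₂ ψ := by
    intro φ₁ φ₂ ψ
    have hfun : F (φ₁ + φ₂) ψ = fun w => F φ₁ ψ w + F φ₂ ψ w := by
      funext w
      by_cases h : w ∈ U <;> simp [hF_def, extU, h]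
    simp only [hd_def, hfun]
    exact deriv_add (hFdiffAt φ₁ ψ) (hFdiffAt φ₂ ψ)
  have H2 : ∀ (c : ℂ) (φ : X) (ψ : Y), d (c • φ) ψ = (RingHom.id ℂ) c • d φ ψ := by
    intro c φ ψ
    have hfun : F (c • φ) ψ = fun w => c * F φ ψ w := by
      funext w
      by_cases h : w ∈ U <;> simp [hF_def, extU, h]
    simp only [hd_def, hfun, RingHom.id_apply, smul_eq_mul]
    exact deriv_const_mul c (hFdiffAt φ ψ)
  have H3 : ∀ (φ : X) (ψ₁ ψ₂ : Y), d φ (ψ₁ + ψ₂) = d φ ψ₁ + d φ ψ₂ := by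
    intro φ ψ₁ ψ₂
    have hfun : F φ (ψ₁ + ψ₂) = fun w => F φ ψ₁ w + F φ ψ₂ w := by
      funext w
      by_cases h : w ∈ U <;> simp [hF_def, extU, h]
    simp only [hd_def, hfun]
    exact deriv_add (hFdiffAt φ ψ₁) (hFdiffAt φ ψ₂)
  have H4 : ∀ (c : ℂ) (φ : X) (ψ : Y), d φ (c • ψ) = (starRingEnd ℂ) c • d φ ψ := by
    intro c φ ψ
    have hfun : F φ (c • ψ) = fun w => (starRingEnd ℂ) c * F φ ψ w := by
      funext w
      by_cases h : w ∈ U <;> simp [hF_def, extU, h]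
    simp only [hd_def, hfun, smul_eq_mul]
    exact deriv_const_mul _ (hFdiffAt φ ψ)
  have hdbound : ∀ φ ψ, ‖d φ ψ‖ ≤ r⁻¹ * ‖φ‖ * ‖ψ‖ := by
    intro φ ψ
    have := norm_deriv_le hRpos (hFdiff φ ψ) (hFbound φ ψ)
    calc ‖d φ ψ‖ ≤ ‖φ‖ * ‖ψ‖ / r := this
      _ = r⁻¹ * ‖φ‖ * ‖ψ‖ := by field_simp
  set A : Sesq X Y := LinearMap.mkContinuous₂
    (LinearMap.mk₂'ₛₗ (RingHom.id ℂ) (starRingEnd ℂ) d H1 H2 H3 H4) r⁻¹ hdbound with hA_def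
  have hA_apply : ∀ φ ψ, A φ ψ = d φ ψ := fun φ ψ => rfl
  -- quadratic remainder bound
  have key : ∀ z : ℂ, ‖z - z₀‖ ≤ r / 2 →
      ‖extU U σ z - extU U σ z₀ - (z - z₀) • A‖ ≤ 2 / r ^ 2 * ‖z - z₀‖ ^ 2 := by
    intro z hz
    have hC : 0 ≤ 2 / r ^ 2 * ‖z - z₀‖ ^ 2 := by positivity
    refine ContinuousLinearMap.opNorm_le_bound _ hC fun φ => ?_
    refine ContinuousLinearMap.opNorm_le_bound _ (by positivity) fun ψ => ?_
    have happ : (extU U σ z - extU U σ z₀ - (z - z₀) • A) φ ψ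
        = F φ ψ z - F φ ψ z₀ - (z - z₀) * d φ ψ := by
      simp [ContinuousLinearMap.sub_apply, ContinuousLinearMap.smul_apply, hA_apply,
        hFval, smul_eq_mul]
    rw [happ]
    have := taylor_bound hRpos (hFdiff φ ψ) (hFbound φ ψ) (h := z - z₀) (by exact_mod_cast hz)
    rw [add_sub_cancel] at this
    calc ‖F φ ψ z - F φ ψ z₀ - (z - z₀) * d φ ψ‖
        ≤ 2 * (‖φ‖ * ‖ψ‖) / (R : ℝ) ^ 2 * ‖z - z₀‖ ^ 2 := this
      _ = 2 / r ^ 2 * ‖z - z₀‖ ^ 2 * ‖φ‖ * ‖ψ‖ := by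
          have : (R : ℝ) = r := rfl
          rw [this]; ring
  have hder : HasDerivAt (extU U σ) A z₀ := by
    refine (hasDerivAt_iff_isLittleO (f := extU U σ)).mpr ?_
    rw [Asymptotics.isLittleO_iff]
    intro c hc
    have hδ : 0 < min (r / 2) (c * r ^ 2 / 2) := by positivity
    filter_upwards [Metric.closedBall_mem_nhds z₀ hδ] with z hz
    rw [Metric.mem_closedBall, dist_eq_norm] at hz
    have hz1 : ‖z - z₀‖ ≤ r / 2 := le_trans hz (min_le_left _ _)
    have hz2 : ‖z - z₀‖ ≤ c * r ^ 2 / 2 := le_trans hz (min_le_right _ _)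
    calc ‖extU U σ z - extU U σ z₀ - (z - z₀) • A‖
        ≤ 2 / r ^ 2 * ‖z - z₀‖ ^ 2 := key z hz1
      _ = (2 / r ^ 2 * ‖z - z₀‖) * ‖z - z₀‖ := by ring
      _ ≤ c * ‖z - z₀‖ := by
          gcongr ?_ * _
          rw [div_mul_eq_mul_div, div_le_iff₀ (by positivity)]
          calc 2 * ‖z - z₀‖ ≤ 2 * (c * r ^ 2 / 2) := by gcongr
            _ = c * r ^ 2 := by ring
  exact hder.differentiableAt.differentiableWithinAt


section Montel
open scoped UniformConvergence

/-- The closed `c`-ball of holomorphic functions, in the `UniformOnFun` type. -/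
def holBall (U : Set ℂ) (c : ℝ) : Set (↥U →ᵤ[{K : Set ↥U | IsCompact K}] ℂ) :=
  {f | HolFn U (UniformOnFun.toFun _ f) ∧ ∀ z : ↥U, ‖UniformOnFun.toFun _ f z‖ ≤ c}

lemma isCompact_of_subtype {s : Set ℂ} (hs : s ⊆ U) (hcs : IsCompact s) :
    IsCompact (Subtype.val ⁻¹' s : Set ↥U) := by
  rw [Topology.IsEmbedding.subtypeVal.isCompact_iff]
  rwa [Subtype.image_preimage_coe, Set.inter_eq_right.mpr hs]

lemma isClosed_holBall (hU : IsOpen U) (c : ℝ) : IsClosed (holBall U c) := by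
  refine isClosed_iff_clusterPt.mpr fun f hf => ?_
  set l := 𝓝 f ⊓ 𝓟 (holBall U c) with hl_def
  haveI : l.NeBot := hf
  have hl_le : l ≤ 𝓝 f := inf_le_left
  have hH : holBall U c ∈ l := mem_inf_of_right (mem_principal_self _)
  have htendsto : Tendsto (id : _ → (↥U →ᵤ[{K : Set ↥U | IsCompact K}] ℂ)) l (𝓝 f) :=
    hl_le
  have huf := UniformOnFun.tendsto_iff_tendstoUniformlyOn.mp htendsto
  -- locally uniform convergence of the extensions
  have htlu : TendstoLocallyUniformlyOn
      (fun (g : ↥U →ᵤ[{K : Set ↥U | IsCompact K}] ℂ) w => extU U (UniformOnFun.toFun _ g) w)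
      (extU U (UniformOnFun.toFun _ f)) l U := by
    intro u hu z hz
    obtain ⟨r, hr, hball⟩ : ∃ r > 0, Metric.closedBall z r ⊆ U :=
      (Metric.nhds_basis_closedBall.mem_iff.mp (hU.mem_nhds hz))
    have hK : IsCompact (Subtype.val ⁻¹' Metric.closedBall z r : Set ↥U) :=
      isCompact_of_subtype hball (isCompact_closedBall z r)
    refine ⟨Metric.closedBall z r,
      mem_nhdsWithin_of_mem_nhds (Metric.closedBall_mem_nhds z hr), ?_⟩
    filter_upwards [huf _ hK u hu] with g hg y hy
    have hyU : y ∈ U := hball hy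
    have h1 : extU U (UniformOnFun.toFun _ f) y = UniformOnFun.toFun _ f ⟨y, hyU⟩ :=
      extU_coe _ ⟨y, hyU⟩
    have h2 : extU U (UniformOnFun.toFun _ g) y = UniformOnFun.toFun _ g ⟨y, hyU⟩ :=
      extU_coe _ ⟨y, hyU⟩
    rw [h1, h2]
    exact hg ⟨y, hyU⟩ hy
  constructor
  · rw [holFn_iff]
    refine htlu.differentiableOn ?_ hU
    exact Filter.eventually_of_mem hH fun g hg => (holFn_iff _).mp hg.1
  · intro z
    have hzK : ({z} : Set ↥U) ∈ {K : Set ↥U | IsCompact K} := isCompact_singleton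
    have hev : Continuous fun g : ↥U →ᵤ[{K : Set ↥U | IsCompact K}] ℂ =>
        UniformOnFun.toFun _ g z :=
      (UniformOnFun.uniformContinuous_eval_of_mem ℂ _ (Set.mem_singleton z) hzK).continuous
    have hcl : IsClosed {g : ↥U →ᵤ[{K : Set ↥U | IsCompact K}] ℂ |
        ‖UniformOnFun.toFun _ g z‖ ≤ c} :=
      isClosed_le (hev.norm) continuous_const
    have : f ∈ closure (holBall U c) := mem_closure_iff_clusterPt.mpr hf
    exact closure_minimal (fun g hg => hg.2 z) hcl this

lemma equicontinuous_holBall (hU : IsOpen U) (c : ℝ) :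
    Equicontinuous (fun g : ↥(holBall U c) => (UniformOnFun.toFun {K : Set ↥U | IsCompact K} g.1 : ↥U → ℂ)) := by
  intro x₀
  rw [Metric.equicontinuousAt_iff]
  intro ε hε
  obtain ⟨r, hr, hball⟩ : ∃ r > 0, Metric.closedBall (x₀ : ℂ) r ⊆ U :=
    (Metric.nhds_basis_closedBall.mem_iff.mp (hU.mem_nhds x₀.2))
  set L : ℝ := max (2 * c / r) 0 with hL_def
  have hL0 : 0 ≤ L := le_max_right _ _
  refine ⟨min (r / 2) (ε / (L + 1)), by positivity, fun x hx g => ?_⟩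
  obtain ⟨g, hg⟩ := g
  -- `extU` of `g` is Lipschitz with constant `L` on `closedBall x₀ (r/2)`
  have hgd : DifferentiableOn ℂ (extU U (UniformOnFun.toFun _ g)) U := (holFn_iff _).mp hg.1
  have hderiv : ∀ w ∈ Metric.closedBall (x₀ : ℂ) (r / 2),
      ‖deriv (extU U (UniformOnFun.toFun _ g)) w‖ ≤ L := by
    intro w hw
    have hsub : Metric.closedBall w (r / 2) ⊆ U := by
      refine subset_trans ?_ hball
      intro y hy
      rw [Metric.mem_closedBall] at *
      calc dist y (x₀ : ℂ) ≤ dist y w + dist w (x₀ : ℂ) := dist_triangle _ _ _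
        _ ≤ r / 2 + r / 2 := add_le_add hy hw
        _ = r := by ring
    have hr2 : (0:ℝ) < r / 2 := by positivity
    have hRpos : (0 : NNReal) < ⟨r / 2, hr2.le⟩ := by
      exact NNReal.coe_pos.mp hr2
    have hder0 := norm_deriv_le (f := extU U (UniformOnFun.toFun _ g)) (z₀ := w)
      (R := ⟨r / 2, hr2.le⟩) (M := c) hRpos (hgd.mono (by exact hsub)) ?_
    · change _ ≤ c / (r / 2) at hder0
      refine le_trans hder0 (le_trans ?_ (le_max_left _ _))
      rw [div_le_div_iff₀ hr2 hr]
      ring_nf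
      exact le_refl _
    · intro y hy
      have hyU : y ∈ U := hsub hy
      have : extU U (UniformOnFun.toFun _ g) y = UniformOnFun.toFun _ g ⟨y, hyU⟩ :=
        extU_coe _ ⟨y, hyU⟩
      rw [this]
      exact hg.2 ⟨y, hyU⟩
  set e := extU U (UniformOnFun.toFun {K : Set ↥U | IsCompact K} g) with he_def
  have hball2 : Metric.closedBall (x₀ : ℂ) (r / 2) ⊆ U :=
    subset_trans (Metric.closedBall_subset_closedBall (by linarith)) hball
  have hfd : ∀ w ∈ Metric.closedBall (x₀ : ℂ) (r / 2),
      HasFDerivWithinAt e (fderiv ℂ e w) (Metric.closedBall (x₀ : ℂ) (r / 2)) w := by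
    intro w hw
    exact ((hgd.differentiableAt (hU.mem_nhds (hball2 hw))).hasFDerivAt).hasFDerivWithinAt
  have hfdbound : ∀ w ∈ Metric.closedBall (x₀ : ℂ) (r / 2), ‖fderiv ℂ e w‖ ≤ L := by
    intro w hw
    refine ContinuousLinearMap.opNorm_le_bound _ hL0 fun v => ?_
    have hv : fderiv ℂ e w v = v • deriv e w := by
      rw [← fderiv_apply_one_eq_deriv]
      rw [show v = v • (1 : ℂ) by simp, map_smul]
      simp
    rw [hv, norm_smul, mul_comm]
    exact mul_le_mul_of_nonneg_right (hderiv w hw) (norm_nonneg v)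
  have hx0mem : (x₀ : ℂ) ∈ Metric.closedBall (x₀ : ℂ) (r / 2) :=
    Metric.mem_closedBall_self (by positivity)
  have hd2 : dist (x : ℂ) (x₀ : ℂ) < min (r / 2) (ε / (L + 1)) := by
    rwa [← Subtype.dist_eq]
  have hxmem : (x : ℂ) ∈ Metric.closedBall (x₀ : ℂ) (r / 2) :=
    Metric.mem_closedBall.mpr (le_of_lt (lt_of_lt_of_le hd2 (min_le_left _ _)))
  have hlip := (convex_closedBall (x₀ : ℂ) (r / 2)).norm_image_sub_le_of_norm_hasFDerivWithin_le
    hfd hfdbound hxmem hx0mem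
  -- hlip : ‖e x₀ - e x‖ ≤ L * ‖x₀ - x‖
  have key : dist (UniformOnFun.toFun {K : Set ↥U | IsCompact K} g x₀)
      (UniformOnFun.toFun {K : Set ↥U | IsCompact K} g x) ≤ L * dist (x₀ : ℂ) (x : ℂ) := by
    rw [← extU_coe (UniformOnFun.toFun {K : Set ↥U | IsCompact K} g) x₀,
      ← extU_coe (UniformOnFun.toFun {K : Set ↥U | IsCompact K} g) x, ← he_def,
      dist_eq_norm, dist_eq_norm]
    exact hlip
  refine lt_of_le_of_lt key ?_
  have hdlt : dist (x₀ : ℂ) (x : ℂ) < ε / (L + 1) := by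
    rw [dist_comm]
    exact lt_of_lt_of_le hd2 (min_le_right _ _)
  calc L * dist (x₀ : ℂ) (x : ℂ) ≤ L * (ε / (L + 1)) :=
        mul_le_mul_of_nonneg_left hdlt.le hL0
    _ < ε := by
        rw [mul_div_assoc', div_lt_iff₀ (by positivity)]
        nlinarith

lemma isCompact_holBall (hU : IsOpen U) (c : ℝ) : IsCompact (holBall U c) := by
  rw [isCompact_iff_compactSpace]
  refine ArzelaAscoli.compactSpace_of_closed_inducing' (X := ↥U) (α := ℂ)
    (𝔖 := {K : Set ↥U | IsCompact K})
    (F := fun g : ↥(holBall U c) => UniformOnFun.toFun {K : Set ↥U | IsCompact K} g.1)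
    (fun K hK => hK) ?_ ?_ ?_ ?_
  · exact Topology.IsInducing.subtypeVal
  · show IsClosed (Set.range (Subtype.val : ↥(holBall U c) → _))
    rw [Subtype.range_coe]
    exact isClosed_holBall hU c
  · exact fun K _ => (equicontinuous_holBall hU c).equicontinuousOn K
  · intro K _ x _
    exact ⟨Metric.closedBall 0 c, isCompact_closedBall _ _,
      fun g => mem_closedBall_zero_iff.mpr (g.2.2 x)⟩

lemma isCompact_holBall_kc (hU : IsOpen U) (c : ℝ) :
    @IsCompact (↥U → ℂ) (kc U ℂ) {f : ↥U → ℂ | HolFn U f ∧ ∀ z : ↥U, ‖f z‖ ≤ c} :=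
  isCompact_holBall hU c

end Montel

section MoreLemmas
open scoped UniformConvergence

variable {U : Set ℂ}

lemma continuous_eval_kc (z : ↥U) :
    @Continuous (↥U → ℂ) ℂ (kc U ℂ) _ (fun f => f z) :=
  (UniformOnFun.uniformContinuous_eval_of_mem (β := ℂ) (𝔖 := {K : Set ↥U | IsCompact K})
    (Set.mem_singleton z) (isCompact_singleton : IsCompact ({z} : Set ↥U))).continuous

lemma holFn_apply {X Y : Type*} [NormedAddCommGroup X] [NormedSpace ℂ X]
    [NormedAddCommGroup Y] [NormedSpace ℂ Y] {σ : ↥U → Sesq X Y}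
    (h : HolFn U σ) (φ : X) (ψ : Y) : HolFn U fun z => σ z φ ψ := by
  obtain ⟨g, hg, he⟩ := h
  refine ⟨fun w => g w φ ψ, ?_, fun z => by simp only [he z]⟩
  have h1 : DifferentiableOn ℂ (fun w => g w φ) U :=
    hg.clm_apply (differentiableOn_const _)
  exact (ContinuousLinearMap.apply' ℂ (starRingEnd ℂ) ψ).differentiable.comp_differentiableOn h1

lemma holFn_continuous {E : Type*} [NormedAddCommGroup E] [NormedSpace ℂ E]
    {f : ↥U → E} (h : HolFn U f) : Continuous f := by
  obtain ⟨g, hg, he⟩ := h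
  have : f = g ∘ (Subtype.val : ↥U → ℂ) := funext he
  rw [this]
  exact hg.continuousOn.comp_continuous continuous_subtype_val fun z => z.2

end MoreLemmas

end Lemmas

/-- **Banach–Alaoglu for holomorphic sesquilinear forms.** The set
`K = {σ ∈ Hol(U,Ses_b(X,Y)) : ‖σ(z)‖ ≤ 1 ∀z}` is `𝒯_Λ̃`-compact; if `X` and `Y` are
separable then `(K,𝒯_Λ̃)` is metrisable. -/
theorem statement_4 (U : Set ℂ) (hU : IsOpen U)
    {X Y : Type*} [NormedAddCommGroup X] [InnerProductSpace ℂ X] [CompleteSpace X]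
    [NormedAddCommGroup Y] [InnerProductSpace ℂ Y] [CompleteSpace Y] :
    @IsCompact _ (luses U X Y) (sesBall U X Y) ∧
    (TopologicalSpace.SeparableSpace X → TopologicalSpace.SeparableSpace Y →
      @TopologicalSpace.MetrizableSpace (↥(sesBall U X Y))
        (TopologicalSpace.induced Subtype.val (luses U X Y))) := by
  classical
  letI tkc : TopologicalSpace (↥U → ℂ) := kc U ℂ
  letI tw : TopologicalSpace (↥U → Sesq X Y) := luses U X Y
  set Φ : (↥U → Sesq X Y) → ((X × Y) → (↥U → ℂ)) :=
    fun σ p z => σ z p.1 p.2 with hΦ_def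
  have h_ind : luses U X Y = TopologicalSpace.induced Φ Pi.topologicalSpace := by
    rw [Pi.topologicalSpace, induced_iInf]
    refine iInf_congr fun p => ?_
    rw [induced_compose]
    rfl
  have hinj : Function.Injective Φ := by
    intro σ τ h
    funext z
    refine ContinuousLinearMap.ext fun φ => ContinuousLinearMap.ext fun ψ => ?_
    exact congrFun (congrFun h (φ, ψ)) z
  have hemb : @Topology.IsEmbedding _ _ tw _ Φ :=
    { eq_induced := h_ind, injective := hinj }
  -- the holomorphic balls
  set Hs : (X × Y) → Set (↥U → ℂ) :=
    fun p => {f : ↥U → ℂ | HolFn U f ∧ ∀ z : ↥U, ‖f z‖ ≤ ‖p.1‖ * ‖p.2‖} with hHs_def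
  set S : Set ((X × Y) → (↥U → ℂ)) :=
    (Set.univ.pi Hs) ∩
      ({F | ∀ (z : ↥U) (φ φ' : X) (ψ : Y), F (φ + φ', ψ) z = F (φ, ψ) z + F (φ', ψ) z} ∩
       {F | ∀ (z : ↥U) (c : ℂ) (φ : X) (ψ : Y), F (c • φ, ψ) z = c * F (φ, ψ) z} ∩
       {F | ∀ (z : ↥U) (φ : X) (ψ ψ' : Y), F (φ, ψ + ψ') z = F (φ, ψ) z + F (φ, ψ') z} ∩
       {F | ∀ (z : ↥U) (c : ℂ) (φ : X) (ψ : Y),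
          F (φ, c • ψ) z = (starRingEnd ℂ) c * F (φ, ψ) z}) with hS_def
  have hev : ∀ (p : X × Y) (z : ↥U),
      Continuous (fun F : (X × Y) → (↥U → ℂ) => F p z) := fun p z =>
    (continuous_eval_kc z).comp (continuous_apply p)
  have hS_cpt : IsCompact S := by
    refine IsCompact.inter_right ?_ ?_
    · exact isCompact_univ_pi fun p => isCompact_holBall_kc hU (‖p.1‖ * ‖p.2‖)
    · refine IsClosed.inter (IsClosed.inter (IsClosed.inter ?_ ?_) ?_) ?_
      · simp only [Set.setOf_forall]
        exact isClosed_iInter fun z => isClosed_iInter fun φ => isClosed_iInter fun φ' =>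
          isClosed_iInter fun ψ => isClosed_eq (hev _ z) ((hev _ z).add (hev _ z))
      · simp only [Set.setOf_forall]
        exact isClosed_iInter fun z => isClosed_iInter fun c => isClosed_iInter fun φ =>
          isClosed_iInter fun ψ => isClosed_eq (hev _ z) (continuous_const.mul (hev _ z))
      · simp only [Set.setOf_forall]
        exact isClosed_iInter fun z => isClosed_iInter fun φ => isClosed_iInter fun ψ =>
          isClosed_iInter fun ψ' => isClosed_eq (hev _ z) ((hev _ z).add (hev _ z))
      · simp only [Set.setOf_forall]
        exact isClosed_iInter fun z => isClosed_iInter fun c => isClosed_iInter fun φ =>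
          isClosed_iInter fun ψ => isClosed_eq (hev _ z) (continuous_const.mul (hev _ z))
  have hnorm_slice : ∀ σ ∈ sesBall U X Y, ∀ (z : ↥U) (φ : X) (ψ : Y),
      ‖σ z φ ψ‖ ≤ ‖φ‖ * ‖ψ‖ := by
    intro σ hσ z φ ψ
    calc ‖σ z φ ψ‖ ≤ ‖σ z φ‖ * ‖ψ‖ := (σ z φ).le_opNorm ψ
      _ ≤ (‖σ z‖ * ‖φ‖) * ‖ψ‖ := by gcongr; exact (σ z).le_opNorm φ
      _ ≤ (1 * ‖φ‖) * ‖ψ‖ := by gcongr; exact hσ.2 z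
      _ = ‖φ‖ * ‖ψ‖ := by ring
  have himage : Φ '' sesBall U X Y = S := by
    apply Set.Subset.antisymm
    · rintro _ ⟨σ, hσ, rfl⟩
      refine ⟨fun p _ => ⟨holFn_apply hσ.1 p.1 p.2, fun z => hnorm_slice σ hσ z p.1 p.2⟩,
        ⟨⟨⟨?_, ?_⟩, ?_⟩, ?_⟩⟩
      · intro z φ φ' ψ; simp [hΦ_def]
      · intro z c φ ψ; simp [hΦ_def]
      · intro z φ ψ ψ'; simp [hΦ_def]
      · intro z c φ ψ; simp [hΦ_def]
    · rintro F ⟨hpi, ⟨⟨h1, h2⟩, h3⟩, h4⟩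
      set σ : ↥U → Sesq X Y := fun z =>
        LinearMap.mkContinuous₂
          (LinearMap.mk₂'ₛₗ (RingHom.id ℂ) (starRingEnd ℂ) (fun φ ψ => F (φ, ψ) z)
            (fun φ φ' ψ => h1 z φ φ' ψ)
            (fun c φ ψ => by simpa using h2 z c φ ψ)
            (fun φ ψ ψ' => h3 z φ ψ ψ')
            (fun c φ ψ => by simpa using h4 z c φ ψ))
          1 (fun φ ψ => by
            simpa using (hpi (φ, ψ) (Set.mem_univ _)).2 z) with hσ_def
      have hσ_apply : ∀ (z : ↥U) (φ : X) (ψ : Y), σ z φ ψ = F (φ, ψ) z := fun z φ ψ => rfl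
      have hσ_norm : ∀ z : ↥U, ‖σ z‖ ≤ 1 := by
        intro z
        refine ContinuousLinearMap.opNorm_le_bound _ zero_le_one fun φ => ?_
        refine ContinuousLinearMap.opNorm_le_bound _ (by positivity) fun ψ => ?_
        rw [hσ_apply]
        calc ‖F (φ, ψ) z‖ ≤ ‖φ‖ * ‖ψ‖ := (hpi (φ, ψ) (Set.mem_univ _)).2 z
          _ = 1 * ‖φ‖ * ‖ψ‖ := by ring
      have hσ_hol : HolFn U σ := by
        refine holFn_of_weak hU hσ_norm fun φ ψ => ?_
        have : (fun z => σ z φ ψ) = F (φ, ψ) := funext fun z => hσ_apply z φ ψ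
        rw [this]
        exact (hpi (φ, ψ) (Set.mem_univ _)).1
      refine ⟨σ, ⟨hσ_hol, hσ_norm⟩, ?_⟩
      funext p z
      cases p
      rfl
  have hcompact : @IsCompact _ (luses U X Y) (sesBall U X Y) := by
    rw [hemb.isCompact_iff, himage]
    exact hS_cpt
  refine ⟨hcompact, fun hsX hsY => ?_⟩
  -- metrizability
  haveI : CompactSpace ↥(sesBall U X Y) := isCompact_iff_compactSpace.mp hcompact
  obtain ⟨DU, hDU_count, hDU_dense⟩ := TopologicalSpace.exists_countable_dense ↥U
  obtain ⟨DX, hDX_count, hDX_dense⟩ := TopologicalSpace.exists_countable_dense X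
  obtain ⟨DY, hDY_count, hDY_dense⟩ := TopologicalSpace.exists_countable_dense Y
  haveI := hDU_count.to_subtype
  haveI := hDX_count.to_subtype
  haveI := hDY_count.to_subtype
  set G : ↥(sesBall U X Y) → (↥DU × ↥DX × ↥DY → ℂ) :=
    fun σ i => σ.1 i.1.1 i.2.1.1 i.2.2.1 with hG_def
  have hG_cont : Continuous G := by
    refine continuous_pi fun i => ?_
    have hproj : Continuous fun σ : ↥U → Sesq X Y => (fun z : ↥U => σ z i.2.1.1 i.2.2.1) := by
      exact continuous_iInf_dom (i := (i.2.1.1, i.2.2.1)) continuous_induced_dom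
    exact ((continuous_eval_kc i.1.1).comp hproj).comp continuous_subtype_val
  have hG_inj : Function.Injective G := by
    intro σ τ h
    have hDense_step : ∀ (φ : X) (ψ : Y), φ ∈ DX → ψ ∈ DY →
        ∀ z : ↥U, σ.1 z φ ψ = τ.1 z φ ψ := by
      intro φ ψ hφ hψ
      have hc1 : Continuous fun z : ↥U => σ.1 z φ ψ :=
        holFn_continuous (holFn_apply σ.2.1 φ ψ)
      have hc2 : Continuous fun z : ↥U => τ.1 z φ ψ :=
        holFn_continuous (holFn_apply τ.2.1 φ ψ)
      have := hc1.ext_on hDU_dense hc2 fun z hz =>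
        congrFun h (⟨z, hz⟩, ⟨φ, hφ⟩, ⟨ψ, hψ⟩)
      exact fun z => congrFun this z
    have hstep2 : ∀ (z : ↥U) (φ : X) (ψ : Y), ψ ∈ DY → σ.1 z φ ψ = τ.1 z φ ψ := by
      intro z φ ψ hψ
      have hc1 : Continuous fun φ : X => σ.1 z φ ψ :=
        (ContinuousLinearMap.apply' ℂ (starRingEnd ℂ) ψ).continuous.comp (σ.1 z).continuous
      have hc2 : Continuous fun φ : X => τ.1 z φ ψ :=
        (ContinuousLinearMap.apply' ℂ (starRingEnd ℂ) ψ).continuous.comp (τ.1 z).continuous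
      have := hc1.ext_on hDX_dense hc2 fun φ hφ => hDense_step φ ψ hφ hψ z
      exact congrFun this φ
    have hstep3 : ∀ (z : ↥U) (φ : X) (ψ : Y), σ.1 z φ ψ = τ.1 z φ ψ := by
      intro z φ ψ
      have hc1 : Continuous fun ψ : Y => σ.1 z φ ψ := (σ.1 z φ).continuous
      have hc2 : Continuous fun ψ : Y => τ.1 z φ ψ := (τ.1 z φ).continuous
      have := hc1.ext_on hDY_dense hc2 fun ψ hψ => hstep2 z φ ψ hψ
      exact congrFun this ψ
    refine Subtype.ext (funext fun z => ?_)
    exact ContinuousLinearMap.ext fun φ => ContinuousLinearMap.ext fun ψ => hstep3 z φ ψ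
  have hG_emb : Topology.IsClosedEmbedding G := hG_cont.isClosedEmbedding hG_inj
  exact hG_emb.isEmbedding.metrizableSpace


end Paper
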